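/- Sequential composition of differential privacy: if A₁ is ε₁-differentially private and, for each output o of A₁, A₂(·, o) is ε₂-differentially private, then the composed mechanism D ↦ (A₁(D), A₂(D, A₁(D))) is (ε₁+ε₂)-differentially private. -/

import Mathlib

open MeasureTheory

/-- A measure-valued mechanism satisfies `ε`-differential privacy. -/
def DP {D Ω : Type*} [MeasurableSpace Ω] (neighbor : D → D → Prop)
    (A : D → Measure Ω) (ε : ℝ) : Prop :=
  ∀ d d', neighbor d d' → ∀ O : Set Ω, MeasurableSet O →
    A d O ≤ ENNReal.ofReal (Real.exp ε) * A d' O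

/-- Sequential (adaptive) composition: if `A₁` is `ε₁`-DP and for each output `o` of `A₁`
the mechanism `A₂ · o` is `ε₂`-DP, then the composed mechanism
`D ↦ (A₁(D), A₂(D, A₁(D)))` is `(ε₁ + ε₂)`-DP. -/
theorem sequential_composition {D Ω₁ Ω₂ : Type*}
    [MeasurableSpace Ω₁] [MeasurableSpace Ω₂]
    (neighbor : D → D → Prop) (ε₁ ε₂ : ℝ)
    (A₁ : D → Measure Ω₁) (A₂ : D → Ω₁ → Measure Ω₂)
    (h₁ : DP neighbor A₁ ε₁)
    (h₂ : ∀ o : Ω₁, DP neighbor (fun d => A₂ d o) ε₂) :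
    ∀ d d', neighbor d d' → ∀ S : Set (Ω₁ × Ω₂), MeasurableSet S →
      ∫⁻ o, A₂ d o (Prod.mk o ⁻¹' S) ∂(A₁ d)
        ≤ ENNReal.ofReal (Real.exp (ε₁ + ε₂)) * ∫⁻ o, A₂ d' o (Prod.mk o ⁻¹' S) ∂(A₁ d') := by
  intro d d' hdd' S hS
  have hsec : ∀ o : Ω₁, MeasurableSet (Prod.mk o ⁻¹' S) :=
    fun o => measurable_prodMk_left hS
  have step1 : ∫⁻ o, A₂ d o (Prod.mk o ⁻¹' S) ∂(A₁ d)
      ≤ ENNReal.ofReal (Real.exp ε₂) * ∫⁻ o, A₂ d' o (Prod.mk o ⁻¹' S) ∂(A₁ d) := by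
    rw [← lintegral_const_mul' _ _ (by simp)]
    exact lintegral_mono fun o => h₂ o d d' hdd' _ (hsec o)
  have hμ : A₁ d ≤ (ENNReal.ofReal (Real.exp ε₁)) • A₁ d' := by
    rw [Measure.le_iff]
    intro s hs
    simpa using h₁ d d' hdd' s hs
  have step2 : ∫⁻ o, A₂ d' o (Prod.mk o ⁻¹' S) ∂(A₁ d)
      ≤ ENNReal.ofReal (Real.exp ε₁) * ∫⁻ o, A₂ d' o (Prod.mk o ⁻¹' S) ∂(A₁ d') := by
    calc ∫⁻ o, A₂ d' o (Prod.mk o ⁻¹' S) ∂(A₁ d)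
        ≤ ∫⁻ o, A₂ d' o (Prod.mk o ⁻¹' S) ∂((ENNReal.ofReal (Real.exp ε₁)) • A₁ d') :=
          lintegral_mono' hμ le_rfl
      _ = ENNReal.ofReal (Real.exp ε₁) * ∫⁻ o, A₂ d' o (Prod.mk o ⁻¹' S) ∂(A₁ d') := by
          rw [lintegral_smul_measure, smul_eq_mul]
  calc ∫⁻ o, A₂ d o (Prod.mk o ⁻¹' S) ∂(A₁ d)
      ≤ ENNReal.ofReal (Real.exp ε₂) * ∫⁻ o, A₂ d' o (Prod.mk o ⁻¹' S) ∂(A₁ d) := step1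
    _ ≤ ENNReal.ofReal (Real.exp ε₂) * (ENNReal.ofReal (Real.exp ε₁)
          * ∫⁻ o, A₂ d' o (Prod.mk o ⁻¹' S) ∂(A₁ d')) := by
        exact mul_le_mul_right step2 _
    _ = ENNReal.ofReal (Real.exp (ε₁ + ε₂)) * ∫⁻ o, A₂ d' o (Prod.mk o ⁻¹' S) ∂(A₁ d') := by
        rw [← mul_assoc, ← ENNReal.ofReal_mul (Real.exp_pos _).le, ← Real.exp_add, add_comm]
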